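/- For every integer k ≥ 2 and every b with 0 < b ≤ 1, there exists a polynomial p of degree at most k with no linear or constant terms such that |p(x) − x| ≤ 2·e^{−(k−1)√b} for all x ∈ [b,1]. -/

import Mathlib

open Polynomial Polynomial.Chebyshev Real

lemma T_real_cosh (n : ℤ) (t : ℝ) :
    (T ℝ n).eval (Real.cosh t) = Real.cosh (n * t) := by
  have h : Complex.ofReal ((T ℝ n).eval (Real.cosh t)) = Complex.ofReal (Real.cosh (n * t)) := by
    have h1 : Complex.ofReal ((T ℝ n).eval (Real.cosh t)) = (T ℂ n).eval (Complex.ofReal (Real.cosh t)) := by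
      rw [← map_T (algebraMap ℝ ℂ) n, Polynomial.eval_map,
        show (Complex.ofReal (Real.cosh t)) = algebraMap ℝ ℂ (Real.cosh t) from rfl,
        Polynomial.eval₂_at_apply]
      rfl
    rw [h1, Complex.ofReal_cosh, ← Complex.cos_mul_I, T_complex_cos,
      Complex.ofReal_cosh, ← Complex.cos_mul_I]
    congr 1
    push_cast
    ring
  exact_mod_cast h

lemma abs_T_le_one (n : ℤ) (u : ℝ) (h1 : -1 ≤ u) (h2 : u ≤ 1) :
    |(T ℝ n).eval u| ≤ 1 := by
  have := Real.cos_arccos h1 h2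
  rw [← this, T_real_cos]
  exact Real.abs_cos_le_one _

lemma natDegree_T_le (n : ℕ) : (T ℝ (n : ℤ)).natDegree ≤ n := by
  induction n using Nat.strong_induction_on with
  | _ n ih =>
    match n, ih with
    | 0, _ => simp [T_zero]
    | 1, _ => simp [T_one]
    | (m+2), ih =>
      have key : T ℝ ((m+2 : ℕ) : ℤ) = 2 * X * T ℝ ((m+1 : ℕ) : ℤ) - T ℝ (m : ℤ) := by
        push_cast
        rw [T_add_two ℝ (m : ℤ)]
      rw [key]
      refine le_trans (natDegree_sub_le _ _) ?_
      have hm1 : (T ℝ ((m+1 : ℕ) : ℤ)).natDegree ≤ m + 1 := ih _ (by omega)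
      have hm : (T ℝ ((m : ℕ) : ℤ)).natDegree ≤ m := ih _ (by omega)
      have hX : (2 * X * T ℝ ((m+1 : ℕ) : ℤ)).natDegree ≤ m + 2 := by
        refine le_trans (natDegree_mul_le) ?_
        have : ((2 * X : ℝ[X])).natDegree ≤ 1 := by
          refine le_trans (natDegree_mul_le) ?_
          simp
        omega
      omega

/-- For every integer `k ≥ 2` and `0 < b ≤ 1`, there exists a polynomial of degree at
most `k` with no constant or linear term approximating `x` on `[b,1]` within
`2·exp(−(k−1)√b)`. -/
theorem exists_poly_approx_id_interval (k : ℕ) (hk : 2 ≤ k) (b : ℝ) (hb0 : 0 < b)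
    (hb1 : b ≤ 1) :
    ∃ p : Polynomial ℝ, p.natDegree ≤ k ∧ p.coeff 0 = 0 ∧ p.coeff 1 = 0 ∧
      ∀ x ∈ Set.Icc b 1, |p.eval x - x| ≤ 2 * Real.exp (-((k : ℝ) - 1) * Real.sqrt b) := by
  rcases eq_or_lt_of_le hb1 with hbeq | hblt
  · refine ⟨X ^ 2, ?_, by simp, by simp, ?_⟩
    · calc (X ^ 2 : ℝ[X]).natDegree ≤ 2 := by simp
        _ ≤ k := hk
    · intro x hx
      have hx1 : x = 1 := le_antisymm hx.2 (hbeq ▸ hx.1)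
      subst hx1
      simp only [eval_pow, eval_X, one_pow, sub_self, abs_zero]
      positivity
  · set n : ℕ := k - 1 with hn_def
    have hn1 : 1 ≤ n := by omega
    have hnk : (n : ℝ) = (k : ℝ) - 1 := by
      rw [hn_def]; push_cast [Nat.cast_sub (by omega : 1 ≤ k)]; ring
    set s : ℝ := Real.sqrt b with hs_def
    have hs0 : 0 < s := Real.sqrt_pos.mpr hb0
    have hs1 : s < 1 := by
      rw [hs_def, show (1:ℝ) = Real.sqrt 1 by simp]
      exact Real.sqrt_lt_sqrt hb0.le hblt
    have hs2 : s ^ 2 = b := Real.sq_sqrt hb0.le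
    have h1s : 0 < 1 - s := by linarith
    have h1b : 0 < 1 - b := by linarith
    set t : ℝ := Real.log ((1 + s) / (1 - s)) with ht_def
    have hrpos : 0 < (1 + s) / (1 - s) := by positivity
    have hexp_t : Real.exp t = (1 + s) / (1 - s) := Real.exp_log hrpos
    have hexp_nt : Real.exp (-t) = (1 - s) / (1 + s) := by
      rw [Real.exp_neg, hexp_t, inv_div]
    have hcosh_t : Real.cosh t = (1 + b) / (1 - b) := by
      rw [Real.cosh_eq, hexp_t, hexp_nt,
        div_add_div _ _ (by positivity) (by positivity), div_div,
        div_eq_div_iff (by positivity) (by positivity)]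
      nlinarith [hs2]
    have hts : s ≤ t := by
      have h2 : 1 - s ≤ Real.exp (-s) := by
        have := Real.add_one_le_exp (-s); linarith
      have h3 : Real.exp s * (1 - s) ≤ 1 := by
        have := mul_le_mul_of_nonneg_left h2 (Real.exp_pos s).le
        rwa [← Real.exp_add, add_neg_cancel, Real.exp_zero] at this
      have h1 : Real.exp s ≤ (1 + s) / (1 - s) := by
        rw [le_div_iff₀ h1s]
        calc Real.exp s * (1 - s) ≤ 1 := h3
          _ ≤ 1 + s := by linarith
      calc s = Real.log (Real.exp s) := (Real.log_exp s).symm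
        _ ≤ t := Real.log_le_log (Real.exp_pos s) h1
    set c : ℝ := Real.cosh ((n : ℝ) * t) with hc_def
    have hc_pos : 0 < c := Real.cosh_pos _
    have hc_ge : Real.exp ((n : ℝ) * s) / 2 ≤ c := by
      have h1 : Real.exp ((n : ℝ) * s) ≤ Real.exp ((n : ℝ) * t) :=
        Real.exp_le_exp.mpr (mul_le_mul_of_nonneg_left hts (by positivity))
      have h2 : Real.exp ((n : ℝ) * t) / 2 ≤ c := by
        rw [hc_def, Real.cosh_eq]
        have := (Real.exp_pos (-((n : ℝ) * t))).le
        linarith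
      linarith
    set L : ℝ[X] := C ((1 + b) / (1 - b)) - C (2 / (1 - b)) * X with hL_def
    set q : ℝ[X] := (Polynomial.Chebyshev.T ℝ (n : ℤ)).comp L with hq_def
    have hL0 : L.eval 0 = (1 + b) / (1 - b) := by simp [hL_def]
    have hq0 : q.eval 0 = c := by
      rw [hq_def, eval_comp, hL0, ← hcosh_t, _root_.T_real_cosh, hc_def]
      norm_num
    refine ⟨X - C (1 / c) * (X * q), ?_, ?_, ?_, ?_⟩
    · have hqd : q.natDegree ≤ n := by
        refine le_trans (natDegree_comp_le) ?_
        have h1 : (Polynomial.Chebyshev.T ℝ (n : ℤ)).natDegree ≤ n := natDegree_T_le n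
        have h2 : L.natDegree ≤ 1 := by
          rw [hL_def]
          refine le_trans (natDegree_sub_le _ _) (max_le (by simp) ?_)
          exact le_trans natDegree_mul_le (by simp)
        calc (Polynomial.Chebyshev.T ℝ (n : ℤ)).natDegree * L.natDegree
            ≤ n * 1 := Nat.mul_le_mul h1 h2
          _ = n := by ring
      have hXq : (X * q : ℝ[X]).natDegree ≤ 1 + n :=
        le_trans natDegree_mul_le (by rw [natDegree_X]; omega)
      have h3 : (C (1 / c) * (X * q)).natDegree ≤ n + 1 :=
        le_trans natDegree_mul_le (by rw [natDegree_C]; omega)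
      refine le_trans (natDegree_sub_le _ _) (max_le ?_ ?_)
      · rw [natDegree_X]; omega
      · omega
    · simp
    · rw [coeff_sub, coeff_X_one, coeff_C_mul,
        show (1:ℕ) = 0 + 1 from rfl, coeff_X_mul,
        coeff_zero_eq_eval_zero, hq0]
      field_simp
      norm_num
    · intro x hx
      have hxL : L.eval x = ((1 + b) - 2 * x) / (1 - b) := by
        rw [hL_def]
        simp only [eval_sub, eval_mul, eval_C, eval_X]
        field_simp
      have hu1 : -1 ≤ L.eval x := by
        rw [hxL, le_div_iff₀ h1b]
        have := hx.2
        nlinarith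
      have hu2 : L.eval x ≤ 1 := by
        rw [hxL, div_le_one h1b]
        have := hx.1
        linarith
      have hqb : |q.eval x| ≤ 1 := by
        rw [hq_def, eval_comp]
        exact abs_T_le_one _ _ hu1 hu2
      have hxabs : |x| ≤ 1 := by
        rw [abs_le]; exact ⟨by linarith [hx.1], hx.2⟩
      have hkey : eval x (X - C (1 / c) * (X * q)) - x = -((1 / c) * (x * q.eval x)) := by
        simp only [eval_sub, eval_mul, eval_C, eval_X]
        ring
      rw [hkey, abs_neg, abs_mul, abs_mul, abs_of_pos (by positivity : (0:ℝ) < 1 / c)]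
      have hb1' : 1 / c * (|x| * |q.eval x|) ≤ 1 / c * 1 := by
        apply mul_le_mul_of_nonneg_left _ (by positivity)
        calc |x| * |q.eval x| ≤ 1 * 1 :=
            mul_le_mul hxabs hqb (abs_nonneg _) (by norm_num)
          _ = 1 := by ring
      have hfin : 1 / c ≤ 2 * Real.exp (-((k : ℝ) - 1) * s) := by
        rw [← hnk]
        have he : 0 < Real.exp ((n : ℝ) * s) / 2 := by positivity
        calc 1 / c ≤ 1 / (Real.exp ((n : ℝ) * s) / 2) :=
            one_div_le_one_div_of_le he hc_ge
          _ = 2 * Real.exp (-(n : ℝ) * s) := by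
            rw [one_div, inv_div, neg_mul, Real.exp_neg, div_eq_mul_inv]
      calc 1 / c * (|x| * |q.eval x|) ≤ 1 / c * 1 := hb1'
        _ = 1 / c := by ring
        _ ≤ 2 * Real.exp (-((k : ℝ) - 1) * s) := hfin
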